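/- Let n > k ≥ 1 and let x : Fin n → ℝ be agents on the real line. Then there exists a k-clustering Y : Fin k → ℝ that is a (1, ⌈n/k⌉ − 1)-core clustering; that is, for every set S ⊆ Fin n with |S| ≥ n/k and every point y' ∈ ℝ, one has (⌈n/k⌉ − 1)·Σ_{i∈S} |x_i − y'| ≥ Σ_{i∈S} min_{j<k} |x_i − Y_j|. -/

import Mathlib

/-- The cost of agent location `p` under the `k`-clustering `Y`:
the minimum distance from `p` to a center of `Y`. -/
noncomputable def clusterCost {X : Type*} [MetricSpace X] {k : ℕ} (Y : Fin k → X) (p : X) : ℝ :=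
  sInf (Set.range fun j => dist p (Y j))

open Finset

lemma tel (v : ℕ → ℝ) {a b : ℕ} (h : a ≤ b) :
    ∑ r ∈ Finset.Ico a b, (v (r+1) - v r) = v b - v a := by
  rw [Finset.sum_Ico_eq_sub _ h, Finset.sum_range_sub, Finset.sum_range_sub]
  ring

lemma gap_expand (v : ℕ → ℝ) (N : ℕ) (T : Finset ℕ) (lo hi : ℕ → ℕ)
    (hlo : ∀ t ∈ T, lo t ≤ hi t) (hhi : ∀ t ∈ T, hi t ≤ N) :
    ∑ t ∈ T, (v (hi t) - v (lo t))
      = ∑ r ∈ Finset.range N,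
          ((T.filter (fun t => lo t ≤ r ∧ r < hi t)).card : ℝ) * (v (r+1) - v r) := by
  have h1 : ∀ t ∈ T, v (hi t) - v (lo t)
      = ∑ r ∈ Finset.range N, (if lo t ≤ r ∧ r < hi t then (v (r+1) - v r) else 0) := by
    intro t ht
    rw [← Finset.sum_filter]
    have : (Finset.range N).filter (fun r => lo t ≤ r ∧ r < hi t) = Finset.Ico (lo t) (hi t) := by
      ext r
      simp only [Finset.mem_filter, Finset.mem_range, Finset.mem_Ico]
      have := hhi t ht
      omega
    rw [this, tel v (hlo t ht)]
  calc ∑ t ∈ T, (v (hi t) - v (lo t))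
      = ∑ t ∈ T, ∑ r ∈ Finset.range N, (if lo t ≤ r ∧ r < hi t then (v (r+1) - v r) else 0) :=
        Finset.sum_congr rfl h1
    _ = ∑ r ∈ Finset.range N, ∑ t ∈ T, (if lo t ≤ r ∧ r < hi t then (v (r+1) - v r) else 0) :=
        Finset.sum_comm
    _ = _ := by
        refine Finset.sum_congr rfl fun r _ => ?_
        rw [← Finset.sum_filter, Finset.sum_const, nsmul_eq_mul]

lemma pair_lower (v : ℕ → ℝ) (hv : Monotone v) (s : ℕ) (y' : ℝ) :
    ∑ r ∈ Finset.range (s-1), ((min (r+1) (s-1-r) : ℕ) : ℝ) * (v (r+1) - v r)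
      ≤ ∑ t ∈ Finset.range s, |v t - y'| := by
  set P := Finset.range (s/2) with hP
  have hexp := gap_expand v (s-1) P (fun t => t) (fun t => s-1-t)
    (by intro t ht; simp only [hP, Finset.mem_range] at ht; show t ≤ s-1-t; omega)
    (by intro t ht; show s-1-t ≤ s-1; omega)
  have step1 : ∑ r ∈ Finset.range (s-1), ((min (r+1) (s-1-r) : ℕ) : ℝ) * (v (r+1) - v r)
      ≤ ∑ r ∈ Finset.range (s-1),
          ((P.filter (fun t => t ≤ r ∧ r < s-1-t)).card : ℝ) * (v (r+1) - v r) := by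
    refine Finset.sum_le_sum fun r hr => ?_
    have hg : 0 ≤ v (r+1) - v r := by simpa using hv (Nat.le_succ r)
    refine mul_le_mul_of_nonneg_right ?_ hg
    have hsub : Finset.range (min (r+1) (s-1-r)) ⊆ P.filter (fun t => t ≤ r ∧ r < s-1-t) := by
      intro t ht
      simp only [Finset.mem_range] at ht
      simp only [Finset.mem_filter, hP, Finset.mem_range]
      simp only [Finset.mem_range] at hr
      omega
    have := Finset.card_le_card hsub
    simp only [Finset.card_range] at this
    exact_mod_cast this
  have step2 : ∑ t ∈ P, (v (s-1-t) - v t)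
      ≤ ∑ t ∈ P, (|v t - y'| + |v (s-1-t) - y'|) := by
    refine Finset.sum_le_sum fun t _ => ?_
    calc v (s-1-t) - v t = (v (s-1-t) - y') + (y' - v t) := by ring
      _ ≤ |v (s-1-t) - y'| + |y' - v t| := add_le_add (le_abs_self _) (le_abs_self _)
      _ = |v t - y'| + |v (s-1-t) - y'| := by rw [abs_sub_comm y']; ring
  have hinj : Set.InjOn (fun t => s-1-t) P := by
    intro a ha b hb hab
    simp only [hP, Finset.coe_range, Set.mem_Iio] at ha hb
    simp only at hab
    omega
  have step3 : ∑ t ∈ P, (|v t - y'| + |v (s-1-t) - y'|)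
      = ∑ t ∈ P, |v t - y'| + ∑ u ∈ P.image (fun t => s-1-t), |v u - y'| := by
    rw [Finset.sum_add_distrib, Finset.sum_image (fun a ha b hb => hinj ha hb)]
  have hdisj : Disjoint P (P.image (fun t => s-1-t)) := by
    rw [Finset.disjoint_left]
    intro a ha hb
    simp only [hP, Finset.mem_range] at ha
    simp only [Finset.mem_image, hP, Finset.mem_range] at hb
    obtain ⟨b, hb1, hb2⟩ := hb
    omega
  have step4 : ∑ t ∈ P, |v t - y'| + ∑ u ∈ P.image (fun t => s-1-t), |v u - y'|
      ≤ ∑ t ∈ Finset.range s, |v t - y'| := by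
    rw [← Finset.sum_union hdisj]
    refine Finset.sum_le_sum_of_subset_of_nonneg ?_ (fun t _ _ => abs_nonneg _)
    intro a ha
    simp only [Finset.mem_union, Finset.mem_image, hP, Finset.mem_range] at ha
    simp only [Finset.mem_range]
    rcases ha with h | ⟨b, hb1, hb2⟩ <;> omega
  calc ∑ r ∈ Finset.range (s-1), ((min (r+1) (s-1-r) : ℕ) : ℝ) * (v (r+1) - v r)
      ≤ ∑ r ∈ Finset.range (s-1),
          ((P.filter (fun t => t ≤ r ∧ r < s-1-t)).card : ℝ) * (v (r+1) - v r) := step1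
    _ = ∑ t ∈ P, (v (s-1-t) - v t) := hexp.symm
    _ ≤ _ := le_trans step2 (step3 ▸ step4)

lemma shared_bound (v : ℕ → ℝ) (hv : Monotone v) (m : ℕ) (hm : 2 ≤ m) (c : ℝ)
    (h1 : v 0 ≤ c) (h2 : c ≤ v (m-1)) :
    ∑ t ∈ Finset.range m, |v t - c| ≤ ((m:ℝ) - 1) * (v (m-1) - v 0) := by
  have hsplit : ∑ t ∈ Finset.range m, |v t - c|
      = |v 0 - c| + ∑ t ∈ Finset.Ico 1 (m-1), |v t - c| + |v (m-1) - c| := by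
    rw [show m = (m-1)+1 by omega, Finset.sum_range_succ, Finset.range_eq_Ico,
      Finset.sum_eq_sum_Ico_succ_bot (by omega : 0 < m - 1)]
    simp
  rw [hsplit]
  have hends : |v 0 - c| + |v (m-1) - c| = v (m-1) - v 0 := by
    rw [abs_of_nonpos (by linarith), abs_of_nonneg (by linarith)]
    ring
  have hmid : ∑ t ∈ Finset.Ico 1 (m-1), |v t - c| ≤ ((m:ℝ) - 2) * (v (m-1) - v 0) := by
    have hb : ∀ t ∈ Finset.Ico 1 (m-1), |v t - c| ≤ v (m-1) - v 0 := by
      intro t ht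
      simp only [Finset.mem_Ico] at ht
      rw [abs_le]
      refine ⟨?_, ?_⟩
      · have := hv (show (0:ℕ) ≤ t by omega); linarith
      · have := hv (show t ≤ m-1 by omega); linarith
    calc ∑ t ∈ Finset.Ico 1 (m-1), |v t - c| ≤ ∑ _t ∈ Finset.Ico 1 (m-1), (v (m-1) - v 0) :=
          Finset.sum_le_sum hb
      _ = ((m:ℝ) - 2) * (v (m-1) - v 0) := by
          rw [Finset.sum_const, Nat.card_Ico, nsmul_eq_mul,
            show m - 1 - 1 = m - 2 from by omega, Nat.cast_sub hm]
          norm_num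
  linarith

lemma coeffA_le (m s r W : ℕ) (hm : 2 ≤ m) (hms : m ≤ s) (hr : r < s - 1)
    (hW1 : W ≤ m - 1) (hW2 : W ≤ s - 1 - r) (hWs : s = m → W = 0) (hW0 : r = 0 → W = 0) :
    (if r < m - 1 then m - 1 else 0) + W ≤ (m-1) * min (r+1) (s-1-r) := by
  rcases Nat.eq_zero_or_pos r with hr0 | hr1
  · subst hr0
    rw [hW0 rfl, if_pos (by omega)]
    have : 1 ≤ min 1 (s-1) := by omega
    calc m - 1 + 0 = (m-1) * 1 := by omega
      _ ≤ (m-1) * min (0+1) (s-1-0) := Nat.mul_le_mul_left _ (by omega)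
  · by_cases hrm : r < m - 1
    · rw [if_pos hrm]
      by_cases hs2 : s - 1 - r ≥ 2
      · have hmin : 2 ≤ min (r+1) (s-1-r) := by omega
        calc m - 1 + W ≤ (m-1) * 2 := by omega
          _ ≤ (m-1) * min (r+1) (s-1-r) := Nat.mul_le_mul_left _ hmin
      · -- s - 1 - r = 1, so r = s-2 < m-1, hence s ≤ m, s = m, W = 0
        have hsm : s = m := by omega
        have hmin : min (r+1) (s-1-r) = 1 := by omega
        rw [hWs hsm, hmin]
        omega
    · rw [if_neg hrm]
      rcases Nat.le_total (r+1) (s-1-r) with h | h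
      · rw [min_eq_left h]
        calc 0 + W ≤ m - 1 := by omega
          _ ≤ (m-1) * (r+1) := Nat.le_mul_of_pos_right _ (by omega)
      · rw [min_eq_right h]
        calc 0 + W ≤ s - 1 - r := by omega
          _ ≤ (m-1)*(s-1-r) := Nat.le_mul_of_pos_left _ (by omega)

lemma key_ineq (m s : ℕ) (hm : 2 ≤ m) (hms : m ≤ s) (v : ℕ → ℝ) (hv : Monotone v)
    (c y' : ℝ) (hc1 : v 0 ≤ c) (hc2 : c ≤ v (m-1)) :
    ∑ t ∈ Finset.range m, |v t - c| + ∑ t ∈ Finset.Ico m s, (v t - v (t+1-m))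
      ≤ ((m:ℝ) - 1) * ∑ t ∈ Finset.range s, |v t - y'| := by
  set g : ℕ → ℝ := fun r => v (r+1) - v r with hg
  have hgnn : ∀ r, 0 ≤ g r := fun r => by simpa [hg] using hv (Nat.le_succ r)
  set W : ℕ → ℕ := fun r => ((Finset.Ico m s).filter (fun t => t+1-m ≤ r ∧ r < t)).card with hW
  -- window part
  have hwin : ∑ t ∈ Finset.Ico m s, (v t - v (t+1-m))
      = ∑ r ∈ Finset.range (s-1), (W r : ℝ) * g r := by
    have := gap_expand v (s-1) (Finset.Ico m s) (fun t => t+1-m) (fun t => t)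
      (by intro t ht; show t+1-m ≤ t; omega)
      (by intro t ht; simp only [Finset.mem_Ico] at ht; show t ≤ s-1; omega)
    simpa [hW, hg] using this
  -- shared part
  have hsh : ∑ t ∈ Finset.range m, |v t - c|
      ≤ ∑ r ∈ Finset.range (s-1), ((if r < m-1 then m-1 else 0 : ℕ) : ℝ) * g r := by
    have htel : v (m-1) - v 0 = ∑ r ∈ Finset.range (m-1), g r := by
      rw [Finset.range_eq_Ico, tel v (Nat.zero_le _)]
    have heq : ∑ r ∈ Finset.range (s-1), ((if r < m-1 then m-1 else 0 : ℕ) : ℝ) * g r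
        = ((m:ℝ) - 1) * (v (m-1) - v 0) := by
      rw [← Finset.sum_subset (Finset.range_subset_range.2 (by omega : m-1 ≤ s-1))
        (by intro r _ hrn
            simp only [Finset.mem_range] at hrn
            rw [if_neg hrn]
            simp)]
      rw [htel, Finset.mul_sum]
      refine Finset.sum_congr rfl fun r hr => ?_
      rw [if_pos (Finset.mem_range.1 hr), Nat.cast_sub (by omega : 1 ≤ m)]
      norm_num
    rw [heq]
    exact shared_bound v hv m hm c hc1 hc2
  have hWfacts : ∀ r, r < s - 1 → (if r < m-1 then m-1 else 0) + W r ≤ (m-1) * min (r+1) (s-1-r) := by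
    intro r hr
    have h3 : W r = ((Finset.Ico m s).filter (fun t => t+1-m ≤ r ∧ r < t)).card := rfl
    refine coeffA_le m s r (W r) hm hms hr ?_ ?_ ?_ ?_
    · have hsub : (Finset.Ico m s).filter (fun t => t+1-m ≤ r ∧ r < t) ⊆ Finset.Ico (r+1) (r+m) := by
        intro t ht
        simp only [Finset.mem_filter, Finset.mem_Ico] at ht ⊢
        omega
      have h2 := Finset.card_le_card hsub
      rw [Nat.card_Ico] at h2
      omega
    · have hsub : (Finset.Ico m s).filter (fun t => t+1-m ≤ r ∧ r < t) ⊆ Finset.Ico (r+1) s := by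
        intro t ht
        simp only [Finset.mem_filter, Finset.mem_Ico] at ht ⊢
        omega
      have h2 := Finset.card_le_card hsub
      rw [Nat.card_Ico] at h2
      omega
    · intro hsm
      have h4 : ((Finset.Ico m s).filter (fun t => t+1-m ≤ r ∧ r < t)).card = 0 := by
        rw [hsm, Finset.Ico_self, Finset.filter_empty, Finset.card_empty]
      omega
    · intro hr0
      have h4 : (Finset.Ico m s).filter (fun t => t+1-m ≤ r ∧ r < t) = ∅ := by
        rw [Finset.filter_eq_empty_iff]
        intro t ht
        simp only [Finset.mem_Ico] at ht
        omega
      rw [h4, Finset.card_empty] at h3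
      omega
  calc ∑ t ∈ Finset.range m, |v t - c| + ∑ t ∈ Finset.Ico m s, (v t - v (t+1-m))
      ≤ ∑ r ∈ Finset.range (s-1), (((if r < m-1 then m-1 else 0 : ℕ) : ℝ) * g r + (W r : ℝ) * g r) := by
        rw [Finset.sum_add_distrib]
        exact add_le_add hsh (le_of_eq hwin)
    _ ≤ ∑ r ∈ Finset.range (s-1), (((m-1) * min (r+1) (s-1-r) : ℕ) : ℝ) * g r := by
        refine Finset.sum_le_sum fun r hr => ?_
        simp only [Finset.mem_range] at hr
        rw [← add_mul, ← Nat.cast_add]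
        exact mul_le_mul_of_nonneg_right (by exact_mod_cast hWfacts r hr) (hgnn r)
    _ = ((m:ℝ) - 1) * ∑ r ∈ Finset.range (s-1), ((min (r+1) (s-1-r) : ℕ) : ℝ) * g r := by
        rw [Finset.mul_sum]
        refine Finset.sum_congr rfl fun r _ => ?_
        push_cast [Nat.cast_sub (by omega : 1 ≤ m)]
        ring
    _ ≤ ((m:ℝ) - 1) * ∑ t ∈ Finset.range s, |v t - y'| := by
        refine mul_le_mul_of_nonneg_left (pair_lower v hv s y') ?_
        have : (2:ℝ) ≤ (m:ℝ) := by exact_mod_cast hm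
        linarith

lemma perm_filter_card {n : ℕ} (σ : Equiv.Perm (Fin n)) (p : Fin n → Prop) [DecidablePred p] :
    ((Finset.univ : Finset (Fin n)).filter (fun q => p (σ q))).card
      = (Finset.univ.filter p).card := by
  apply Finset.card_bij (fun q _ => σ q)
  · intro q hq
    simp only [Finset.mem_filter, Finset.mem_univ, true_and] at hq ⊢
    exact hq
  · intro q1 _ q2 _ h
    exact σ.injective h
  · intro i hi
    simp only [Finset.mem_filter, Finset.mem_univ, true_and] at hi
    exact ⟨σ.symm i, by simp [hi], by simp⟩

lemma exists_center {n k m : ℕ} (hm : 0 < m) (hn : n ≤ k * m) (x : Fin n → ℝ)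
    (a b : ℝ)
    (hcard : m ≤ (Finset.univ.filter (fun i => a ≤ x i ∧ x i ≤ b)).card) :
    ∃ j : Fin k, ∃ h : (j : ℕ) * m < n,
      a ≤ x (Tuple.sort x ⟨(j:ℕ)*m, h⟩) ∧ x (Tuple.sort x ⟨(j:ℕ)*m, h⟩) ≤ b := by
  classical
  set w : Fin n → ℝ := fun q => x (Tuple.sort x q) with hwdef
  have hw : Monotone w := Tuple.monotone_sort x
  set A := (Finset.univ.filter (fun i => x i < a)).card with hA
  -- a ≤ b
  have hab : a ≤ b := by
    have : (Finset.univ.filter (fun i => a ≤ x i ∧ x i ≤ b)).Nonempty := by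
      rw [← Finset.card_pos]; omega
    obtain ⟨i, hi⟩ := this
    simp only [Finset.mem_filter] at hi
    linarith [hi.2.1, hi.2.2]
  -- disjointness counting
  have hdisj : Disjoint (Finset.univ.filter (fun i => x i < a))
      (Finset.univ.filter (fun i => a ≤ x i ∧ x i ≤ b)) := by
    rw [Finset.disjoint_left]
    intro i h1 h2
    simp only [Finset.mem_filter] at h1 h2
    linarith [h1.2, h2.2.1]
  have hAmn : A + m ≤ n := by
    have := Finset.card_union_of_disjoint hdisj
    have hle := Finset.card_le_card (Finset.subset_univ
      ((Finset.univ.filter (fun i => x i < a)) ∪ (Finset.univ.filter (fun i => a ≤ x i ∧ x i ≤ b))))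
    simp only [Finset.card_univ, Fintype.card_fin] at hle
    omega
  have hAb : A + m ≤ (Finset.univ.filter (fun i => x i ≤ b)).card := by
    have hsub : (Finset.univ.filter (fun i => x i < a)) ∪ (Finset.univ.filter (fun i => a ≤ x i ∧ x i ≤ b))
        ⊆ Finset.univ.filter (fun i => x i ≤ b) := by
      intro i hi
      simp only [Finset.mem_union, Finset.mem_filter, Finset.mem_univ, true_and] at hi ⊢
      rcases hi with h | h
      · linarith
      · exact h.2
    have := Finset.card_le_card hsub
    rw [Finset.card_union_of_disjoint hdisj] at this
    omega
  -- fact1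
  have fact1 : ∀ p : Fin n, A ≤ (p : ℕ) → a ≤ w p := by
    intro p hp
    by_contra hcon
    push_neg at hcon
    have hsub : Finset.Iic p ⊆ Finset.univ.filter (fun q => w q < a) := by
      intro q hq
      simp only [Finset.mem_Iic] at hq
      simp only [Finset.mem_filter, Finset.mem_univ, true_and]
      exact lt_of_le_of_lt (hw hq) hcon
    have h1 := Finset.card_le_card hsub
    rw [Fin.card_Iic] at h1
    have h2 : (Finset.univ.filter (fun q => w q < a)).card = A := by
      rw [hA, hwdef]
      exact perm_filter_card (Tuple.sort x) (fun i => x i < a)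
    omega
  -- fact2
  have fact2 : ∀ p : Fin n, (p : ℕ) < A + m → w p ≤ b := by
    intro p hp
    by_contra hcon
    push_neg at hcon
    have hsub : Finset.univ.filter (fun q => w q ≤ b) ⊆ Finset.Iio p := by
      intro q hq
      simp only [Finset.mem_filter, Finset.mem_univ, true_and] at hq
      simp only [Finset.mem_Iio]
      by_contra hq2
      push_neg at hq2
      exact absurd (le_trans (hw hq2) hq) (not_le.2 hcon)
    have h1 := Finset.card_le_card hsub
    rw [Fin.card_Iio] at h1
    have h2 : (Finset.univ.filter (fun q => w q ≤ b)).card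
        = (Finset.univ.filter (fun i => x i ≤ b)).card := by
      rw [hwdef]
      exact perm_filter_card (Tuple.sort x) (fun i => x i ≤ b)
    omega
  -- choose the multiple of m
  set j0 := (A + (m-1)) / m with hj0
  have hdm := Nat.div_add_mod (A + (m-1)) m
  have hmod : (A + (m-1)) % m < m := Nat.mod_lt _ hm
  have hj0low : A ≤ j0 * m := by
    zify
    have h1 : (m : ℤ) * j0 + ((A + (m-1)) % m : ℕ) = (A : ℤ) + (m - 1 : ℕ) := by exact_mod_cast hdm
    have h2 : ((A + (m-1)) % m : ℕ) < (m:ℤ) := by exact_mod_cast hmod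
    have h3 : ((m - 1 : ℕ) : ℤ) = (m : ℤ) - 1 := by
      rw [Nat.cast_sub hm]; norm_num
    nlinarith [h1, h2, h3]
  have hj0high : j0 * m ≤ A + (m-1) := Nat.div_mul_le_self _ _
  have hj0n : j0 * m < n := by omega
  have hj0k : j0 < k := by
    by_contra hcon
    push_neg at hcon
    have : k * m ≤ j0 * m := Nat.mul_le_mul_right m hcon
    omega
  exact ⟨⟨j0, hj0k⟩, hj0n, fact1 _ (by simpa using hj0low), fact2 _ (by simp; omega)⟩

lemma clusterCost_le {k : ℕ} (Y : Fin k → ℝ) (p : ℝ) (j : Fin k) :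
    clusterCost Y p ≤ |p - Y j| := by
  have hbdd : BddBelow (Set.range fun j => dist p (Y j)) := by
    refine ⟨0, ?_⟩
    rintro _ ⟨j, rfl⟩
    exact dist_nonneg
  simpa [clusterCost, Real.dist_eq] using csInf_le hbdd ⟨j, rfl⟩

theorem stmt4 {n k : ℕ} (hk : 0 < k) (hnk : k < n) (x : Fin n → ℝ) :
    ∃ Y : Fin k → ℝ,
      ∀ S : Finset (Fin n), (n : ℝ) / (k : ℝ) ≤ S.card →
        ∀ y' : ℝ,
          ∑ i ∈ S, clusterCost Y (x i) ≤
            ((⌈(n : ℝ) / (k : ℝ)⌉₊ : ℝ) - 1) * ∑ i ∈ S, |x i - y'| := by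
  classical
  set m := ⌈(n : ℝ) / (k : ℝ)⌉₊ with hmdef
  have hkR : (0:ℝ) < k := by exact_mod_cast hk
  have hm2 : 2 ≤ m := by
    have h1 : (1:ℝ) < (n:ℝ) / (k:ℝ) := by
      rw [lt_div_iff₀ hkR]
      norm_num
      exact_mod_cast hnk
    have h2 : ((1:ℕ):ℝ) < (n:ℝ)/(k:ℝ) := by exact_mod_cast h1
    have := Nat.lt_ceil.2 h2
    omega
  have hm0 : 0 < m := by omega
  have hkm : n ≤ k * m := by
    have h1 : (n:ℝ) / (k:ℝ) ≤ (m:ℝ) := Nat.le_ceil _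
    rw [div_le_iff₀ hkR] at h1
    have : (n:ℝ) ≤ (k:ℝ) * (m:ℝ) := by linarith
    exact_mod_cast this
  set Y : Fin k → ℝ := fun j =>
    if h : (j : ℕ) * m < n then x (Tuple.sort x ⟨(j:ℕ)*m, h⟩) else 0 with hYdef
  refine ⟨Y, ?_⟩
  intro S hS y'
  set s := S.card with hsdef
  have hms : m ≤ s := by
    rw [hmdef]
    exact Nat.ceil_le.2 (by exact_mod_cast hS)
  have hs0 : 0 < s := by omega
  -- sorted values of S
  set e := S.orderIsoOfFin rfl with hedef
  set f : Fin s → ℝ := fun t => x (e t) with hfdef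
  set σ := Tuple.sort f with hσdef
  have hvvmono : Monotone (fun t => f (σ t)) := Tuple.monotone_sort f
  set v : ℕ → ℝ := fun t => f (σ ⟨min t (s-1), by omega⟩) with hvdef
  have hmono : Monotone v := by
    intro a b hab
    exact hvvmono (show (⟨min a (s-1), by omega⟩ : Fin s) ≤ ⟨min b (s-1), by omega⟩ by
      simp only [Fin.mk_le_mk]; omega)
  have hveq : ∀ t : Fin s, v t.val = f (σ t) := by
    intro t
    have h1 : (⟨min t.val (s-1), by omega⟩ : Fin s) = t := by
      apply Fin.ext
      simp only []
      omega
    rw [hvdef]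
    simp only []
    rw [h1]
  -- sum transfer
  have hsum : ∀ F : ℝ → ℝ, ∑ i ∈ S, F (x i) = ∑ t ∈ Finset.range s, F (v t) := by
    intro F
    calc ∑ i ∈ S, F (x i)
        = ∑ i : {y // y ∈ S}, F (x i) := (Finset.sum_coe_sort S (fun i => F (x i))).symm
      _ = ∑ t : Fin s, F (x (e t)) :=
          (Equiv.sum_comp e.toEquiv (fun i : {y // y ∈ S} => F (x ↑i))).symm
      _ = ∑ t : Fin s, F (f t) := rfl
      _ = ∑ t : Fin s, F (f (σ t)) := (Equiv.sum_comp σ (fun t => F (f t))).symm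
      _ = ∑ t : Fin s, F (v t.val) :=
          Finset.sum_congr rfl (fun t _ => (congrArg F (hveq t)).symm)
      _ = ∑ t ∈ Finset.range s, F (v t) := Fin.sum_univ_eq_sum_range (fun t => F (v t)) s
  -- window centers
  have hwindow : ∀ a b : ℕ, a ≤ b → b < s → m ≤ b + 1 - a →
      ∃ j : Fin k, v a ≤ Y j ∧ Y j ≤ v b := by
    intro a b hab hbs hmab
    have hcard : m ≤ (Finset.univ.filter (fun i => v a ≤ x i ∧ x i ≤ v b)).card := by
      have hinj : m ≤ ((Finset.Ico a (b+1)).image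
          (fun u => ((e (σ ⟨min u (s-1), by omega⟩)) : Fin n))).card := by
        rw [Finset.card_image_of_injOn]
        · rw [Nat.card_Ico]; omega
        · intro u1 h1 u2 h2 hequ
          simp only [Finset.coe_Ico, Set.mem_Ico] at h1 h2
          have he1 := Subtype.coe_injective hequ
          have he2 := e.injective he1
          have he3 := σ.injective he2
          have he4 : min u1 (s-1) = min u2 (s-1) := congrArg Fin.val he3
          omega
      refine le_trans hinj (Finset.card_le_card ?_)
      intro i hi
      simp only [Finset.mem_image] at hi
      obtain ⟨u, hu, rfl⟩ := hi
      simp only [Finset.mem_Ico] at hu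
      simp only [Finset.mem_filter, Finset.mem_univ, true_and]
      have hxv : x ((e (σ ⟨min u (s-1), by omega⟩)) : Fin n) = v u := rfl
      rw [hxv]
      exact ⟨hmono (by omega : a ≤ u), hmono (by omega : u ≤ b)⟩
    obtain ⟨j, hj, hj1, hj2⟩ := exists_center hm0 hkm x (v a) (v b) hcard
    refine ⟨j, ?_, ?_⟩
    · rw [hYdef]; simp only [dif_pos hj]; exact hj1
    · rw [hYdef]; simp only [dif_pos hj]; exact hj2
  -- the shared center
  obtain ⟨j0, hj01, hj02⟩ := hwindow 0 (m-1) (by omega) (by omega) (by omega)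
  -- main chain
  rw [hsum (clusterCost Y), hsum (fun p => |p - y'|)]
  rw [← Finset.sum_range_add_sum_Ico (fun t => clusterCost Y (v t)) hms]
  have hb1 : ∑ t ∈ Finset.range m, clusterCost Y (v t) ≤ ∑ t ∈ Finset.range m, |v t - Y j0| :=
    Finset.sum_le_sum fun t _ => clusterCost_le Y (v t) j0
  have hb2 : ∑ t ∈ Finset.Ico m s, clusterCost Y (v t)
      ≤ ∑ t ∈ Finset.Ico m s, (v t - v (t+1-m)) := by
    refine Finset.sum_le_sum fun t ht => ?_
    simp only [Finset.mem_Ico] at ht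
    obtain ⟨j, hj1, hj2⟩ := hwindow (t+1-m) t (by omega) (by omega) (by omega)
    calc clusterCost Y (v t) ≤ |v t - Y j| := clusterCost_le Y (v t) j
      _ = v t - Y j := abs_of_nonneg (by linarith)
      _ ≤ v t - v (t+1-m) := by linarith
  have hfin := key_ineq m s hm2 hms v hmono (Y j0) y' hj01 hj02
  calc ∑ t ∈ Finset.range m, clusterCost Y (v t) + ∑ t ∈ Finset.Ico m s, clusterCost Y (v t)
      ≤ ∑ t ∈ Finset.range m, |v t - Y j0| + ∑ t ∈ Finset.Ico m s, (v t - v (t+1-m)) :=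
        add_le_add hb1 hb2
    _ ≤ ((m:ℝ) - 1) * ∑ t ∈ Finset.range s, |v t - y'| := hfin
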